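/- Let k ≥ 1, let S_1, …, S_k be strings over an alphabet Σ, let c be a symbol not in Σ, and let x ≥ 0 be an integer. Then the median edit distance is unchanged by appending the same block of x copies of c to every string: δ_E(S_1 · c^x, S_2 · c^x, …, S_k · c^x) = δ_E(S_1, …, S_k). -/

import Mathlib

/-- The costs of the Levenshtein edit operations (formerly in Mathlib). -/
structure Levenshtein.Cost (α β δ : Type*) where
  /-- Cost to delete an element from a list. -/
  delete : α → δ
  /-- Cost in insert an element into a list. -/
  insert : β → δ
  /-- Cost to substitute one element for another in a list. -/
  substitute : α → β → δ

/-- The default cost structure, with cost 1 for every operation (formerly in Mathlib). -/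
def Levenshtein.defaultCost {α : Type*} [DecidableEq α] : Levenshtein.Cost α α ℕ where
  delete _ := 1
  insert _ := 1
  substitute a b := if a = b then 0 else 1

/-- Auxiliary step of the Levenshtein algorithm (formerly in Mathlib). -/
def Levenshtein.impl {α β δ : Type*} [AddZeroClass δ] [Min δ]
    (C : Levenshtein.Cost α β δ) (xs : List α) (y : β)
    (d : {r : List δ // 0 < r.length}) : {r : List δ // 0 < r.length} :=
  let ⟨ds, w⟩ := d
  xs.zip (ds.zip ds.tail) |>.foldr
    (init := ⟨[C.insert y + ds.getLast (List.ne_nil_of_length_pos w)], by simp⟩)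
    (fun ⟨x, d₀, d₁⟩ ⟨r, w⟩ =>
      ⟨min (C.delete x + r[0]) (min (C.insert y + d₀) (C.substitute x y + d₁)) :: r, by simp⟩)

/-- Edit distances of `xs` to all suffixes of `ys` (formerly in Mathlib). -/
def suffixLevenshtein {α β δ : Type*} [AddZeroClass δ] [Min δ]
    (C : Levenshtein.Cost α β δ) (xs : List α) (ys : List β) :
    {r : List δ // 0 < r.length} :=
  ys.foldr
    (Levenshtein.impl C xs)
    (xs.foldr (init := ⟨[0], by simp⟩) (fun a ⟨ds, w⟩ => ⟨(C.delete a + ds[0]) :: ds, by simp⟩))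

/-- The Levenshtein distance with cost structure `C` (formerly in Mathlib). -/
def levenshtein {α β δ : Type*} [AddZeroClass δ] [Min δ]
    (C : Levenshtein.Cost α β δ) (xs : List α) (ys : List β) : δ :=
  let ⟨r, w⟩ := suffixLevenshtein C xs ys
  r[0]

/-- The Levenshtein edit distance between two strings. -/
def editDist {α : Type*} [DecidableEq α] (s t : List α) : ℕ :=
  levenshtein Levenshtein.defaultCost s t

/-- The median edit distance of a family of strings. -/
noncomputable def medianED {α : Type*} [DecidableEq α] (L : List (List α)) : ℕ :=
  sInf { d : ℕ | ∃ T : List α, d = (L.map fun s => editDist s T).sum }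

namespace Levenshtein

@[simp] theorem defaultCost_delete {α : Type*} [DecidableEq α] (a : α) :
    (defaultCost : Cost α α ℕ).delete a = 1 := rfl

@[simp] theorem defaultCost_insert {α : Type*} [DecidableEq α] (a : α) :
    (defaultCost : Cost α α ℕ).insert a = 1 := rfl

@[simp] theorem defaultCost_substitute {α : Type*} [DecidableEq α] (a b : α) :
    (defaultCost : Cost α α ℕ).substitute a b = if a = b then 0 else 1 := rfl

theorem impl_cons {α β δ : Type*} [AddZeroClass δ] [Min δ] (C : Levenshtein.Cost α β δ)
    (x : α) (xs : List α) (y : β) (d : δ) (ds : List δ) (w : 0 < (d :: ds).length)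
    (w' : 0 < List.length ds) :
    impl C (x :: xs) y ⟨d :: ds, w⟩ =
      let ⟨r, w⟩ := impl C xs y ⟨ds, w'⟩
      ⟨min (C.delete x + r[0]) (min (C.insert y + d) (C.substitute x y + ds[0])) :: r, by simp⟩ :=
  match ds, w' with | _ :: _, _ => rfl

theorem impl_cons_fst_zero {α β δ : Type*} [AddZeroClass δ] [Min δ] (C : Levenshtein.Cost α β δ)
    (x : α) (xs : List α) (y : β) (d : δ) (ds : List δ) (w : 0 < (d :: ds).length)
    (h) (w' : 0 < List.length ds) :
    (impl C (x :: xs) y ⟨d :: ds, w⟩).1[0]'h =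
      let ⟨r, w⟩ := impl C xs y ⟨ds, w'⟩
      min (C.delete x + r[0]) (min (C.insert y + d) (C.substitute x y + ds[0])) :=
  match ds, w' with | _ :: _, _ => rfl

theorem impl_length {α β δ : Type*} [AddZeroClass δ] [Min δ] (C : Levenshtein.Cost α β δ)
    (xs : List α) (y : β)
    (d : {r : List δ // 0 < r.length}) (w : d.1.length = xs.length + 1) :
    (impl C xs y d).1.length = xs.length + 1 := by
  induction xs generalizing d with
  | nil => rfl
  | cons x xs ih =>
    dsimp [impl]
    match d, w with
    | ⟨d₁ :: d₂ :: ds, _⟩, w =>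
      dsimp
      congr 1
      exact ih ⟨d₂ :: ds, (by simp)⟩ (by simpa using w)

end Levenshtein

open Levenshtein

section LevLemmas

variable {α β δ : Type*} [AddZeroClass δ] [Min δ] {C : Levenshtein.Cost α β δ}

theorem suffixLevenshtein_length (xs : List α) (ys : List β) :
    (suffixLevenshtein C xs ys).1.length = xs.length + 1 := by
  induction ys with
  | nil =>
    dsimp [suffixLevenshtein]
    induction xs with
    | nil => rfl
    | cons _ xs ih =>
      simp_all
  | cons y ys ih =>
    dsimp [suffixLevenshtein]
    rw [impl_length]
    exact ih

theorem suffixLevenshtein_cons₂ (xs : List α) (y ys) :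
    suffixLevenshtein C xs (y :: ys) = (impl C xs) y (suffixLevenshtein C xs ys) :=
  rfl

theorem suffixLevenshtein_cons₁_aux {α} {x y : {r : List α // 0 < r.length}}
    (w₀ : x.1[0]'x.2 = y.1[0]'y.2) (w : x.1.tail = y.1.tail) : x = y := by
  match x, y with
  | ⟨hx :: tx, _⟩, ⟨hy :: ty, _⟩ => simp_all

theorem suffixLevenshtein_cons₁
    (x : α) (xs ys) :
    suffixLevenshtein C (x :: xs) ys =
      ⟨levenshtein C (x :: xs) ys ::
        (suffixLevenshtein C xs ys).1, by simp⟩ := by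
  induction ys with
  | nil =>
    dsimp [levenshtein, suffixLevenshtein]
    rfl
  | cons y ys ih =>
    apply suffixLevenshtein_cons₁_aux
    · rfl
    · rw [suffixLevenshtein_cons₂ (x :: xs), ih, impl_cons]
      · rfl
      · simp [suffixLevenshtein_length]

theorem suffixLevenshtein_cons_cons_fst_get_zero
    (x : α) (xs y ys) (w) :
    (suffixLevenshtein C (x :: xs) (y :: ys)).1[0]'w =
      let ⟨dx, _⟩ := suffixLevenshtein C xs (y :: ys)
      let ⟨dy, _⟩ := suffixLevenshtein C (x :: xs) ys
      let ⟨dxy, _⟩ := suffixLevenshtein C xs ys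
      min
        (C.delete x + dx[0])
        (min
          (C.insert y + dy[0])
          (C.substitute x y + dxy[0])) := by
  conv =>
    lhs
    dsimp only [suffixLevenshtein_cons₂]
  simp only [suffixLevenshtein_cons₁]
  rw [impl_cons_fst_zero]
  rfl

@[simp]
theorem levenshtein_nil_nil : levenshtein C [] [] = 0 := by
  simp [levenshtein, suffixLevenshtein]

@[simp]
theorem levenshtein_nil_cons (y) (ys) :
    levenshtein C [] (y :: ys) = C.insert y + levenshtein C [] ys := by
  have hl := suffixLevenshtein_length (C := C) [] ys
  simp only [levenshtein, suffixLevenshtein_cons₂]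
  have key : ∀ d : {r : List δ // 0 < r.length}, (h : d.1.length = 1) →
      (impl C [] y d).1[0]'(by rw [impl_length C [] y d (by simpa using h)]; simp) =
        C.insert y + d.1[0]'d.2 := by
    rintro ⟨r, w⟩ h
    match r, w, h with
    | [a], _, _ => rfl
  exact key _ (by simpa using hl)

@[simp]
theorem levenshtein_cons_nil (x : α) (xs : List α) :
    levenshtein C (x :: xs) [] = C.delete x + levenshtein C xs [] :=
  rfl

@[simp]
theorem levenshtein_cons_cons
    (x : α) (xs : List α) (y : β) (ys : List β) :
    levenshtein C (x :: xs) (y :: ys) =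
      min (C.delete x + levenshtein C xs (y :: ys))
        (min (C.insert y + levenshtein C (x :: xs) ys)
          (C.substitute x y + levenshtein C xs ys)) :=
  suffixLevenshtein_cons_cons_fst_get_zero ..

end LevLemmas

section Aux

variable {α : Type*} [DecidableEq α]

lemma editDist_nil_left (t : List α) : editDist [] t = t.length := by
  induction t with
  | nil => simp [editDist]
  | cons b t ih => simp [editDist] at ih ⊢; omega

lemma editDist_nil_right (s : List α) : editDist s [] = s.length := by
  induction s with
  | nil => simp [editDist]
  | cons a s ih => simp [editDist] at ih ⊢; omega

lemma editDist_del_le (a : α) (s t : List α) :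
    editDist (a :: s) t ≤ 1 + editDist s t := by
  cases t with
  | nil => simp [editDist]
  | cons b t =>
    rw [editDist, levenshtein_cons_cons]
    exact le_trans (min_le_left _ _) (by simp [editDist])

lemma editDist_ins_le (s : List α) (b : α) (t : List α) :
    editDist s (b :: t) ≤ 1 + editDist s t := by
  cases s with
  | nil => simp [editDist]
  | cons a s =>
    rw [editDist, levenshtein_cons_cons]
    exact le_trans (min_le_right _ _) (le_trans (min_le_left _ _) (by simp [editDist]))

lemma editDist_sub_le (a : α) (s : List α) (b : α) (t : List α) :
    editDist (a :: s) (b :: t) ≤ (if a = b then 0 else 1) + editDist s t := by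
  rw [editDist, levenshtein_cons_cons]
  exact le_trans (min_le_right _ _) (le_trans (min_le_right _ _) (by simp [editDist]))

lemma editDist_self (s : List α) : editDist s s = 0 := by
  induction s with
  | nil => simp [editDist]
  | cons a s ih =>
    have := editDist_sub_le a s a s
    simp [ih] at this
    omega

/-- Appending a common suffix does not increase edit distance. -/
lemma editDist_append_le (r : List α) :
    ∀ (s t : List α), editDist (s ++ r) (t ++ r) ≤ editDist s t := by
  intro s
  induction s with
  | nil =>
    intro t
    induction t with
    | nil => simp [editDist_self]
    | cons b t iht =>
      calc editDist ([] ++ r) ((b :: t) ++ r) ≤ 1 + editDist ([] ++ r) (t ++ r) :=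
            editDist_ins_le _ _ _
        _ ≤ 1 + editDist ([] : List α) t := by omega
        _ = editDist [] (b :: t) := by
            rw [editDist_nil_left, editDist_nil_left]; simp; omega
  | cons a s ihs =>
    intro t
    induction t with
    | nil =>
      calc editDist ((a :: s) ++ r) ([] ++ r) ≤ 1 + editDist (s ++ r) ([] ++ r) :=
            editDist_del_le _ _ _
        _ ≤ 1 + editDist s ([] : List α) := by have := ihs []; omega
        _ = editDist (a :: s) [] := by
            rw [editDist_nil_right, editDist_nil_right]; simp; omega
    | cons b t iht =>
      show editDist (a :: (s ++ r)) (b :: (t ++ r)) ≤ editDist (a :: s) (b :: t)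
      rw [editDist, editDist, levenshtein_cons_cons, levenshtein_cons_cons]
      refine min_le_min ?_ (min_le_min ?_ ?_)
      · exact Nat.add_le_add_left (ihs (b :: t)) _
      · exact Nat.add_le_add_left iht _
      · exact Nat.add_le_add_left (ihs t) _

lemma filter_cons_self (c : α) (t : List α) :
    (c :: t).filter (· ≠ c) = t.filter (· ≠ c) := by
  simp [List.filter_cons]

lemma filter_cons_ne {b c : α} (hb : b ≠ c) (t : List α) :
    (b :: t).filter (· ≠ c) = b :: t.filter (· ≠ c) := by
  simp [List.filter_cons, hb]

lemma length_filter_le_editDist_replicate (c : α) :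
    ∀ (t : List α) (x : ℕ),
      (t.filter (· ≠ c)).length ≤ editDist (List.replicate x c) t := by
  intro t
  induction t with
  | nil => intro x; simp
  | cons b t iht =>
    intro x
    induction x with
    | zero =>
      rw [List.replicate_zero, editDist_nil_left]
      exact List.length_filter_le _ _
    | succ x ihx =>
      rw [List.replicate_succ, editDist, levenshtein_cons_cons]
      refine le_min ?_ (le_min ?_ ?_)
      · have := ihx
        simp only [Levenshtein.defaultCost_delete]
        rw [← editDist]
        omega
      · simp only [Levenshtein.defaultCost_insert]
        rw [← editDist, ← List.replicate_succ]
        have h1 := iht (x + 1)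
        by_cases hb : b = c
        · subst hb; rw [filter_cons_self]; omega
        · rw [filter_cons_ne hb, List.length_cons]; omega
      · have h1 := iht x
        rw [← editDist]
        by_cases hb : b = c
        · subst hb
          simp only [Levenshtein.defaultCost_substitute, if_pos rfl]
          rw [filter_cons_self]
          omega
        · simp only [Levenshtein.defaultCost_substitute, if_neg (Ne.symm hb)]
          rw [filter_cons_ne hb, List.length_cons]
          omega

/-- Key lemma: removing all `c`'s from `t` and the `c`-block from `s ++ c^x`
does not increase the edit distance, provided `c` does not occur in `s`. -/
lemma editDist_filter_le (c : α) (x : ℕ) :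
    ∀ (s : List α), c ∉ s → ∀ (t : List α),
      editDist s (t.filter (· ≠ c)) ≤ editDist (s ++ List.replicate x c) t := by
  intro s
  induction s with
  | nil =>
    intro _ t
    rw [editDist_nil_left, List.nil_append]
    exact length_filter_le_editDist_replicate c t x
  | cons a s ihs =>
    intro hs t
    have hac : a ≠ c := fun h => hs (h ▸ List.mem_cons_self)
    have hcs : c ∉ s := fun h => hs (List.mem_cons_of_mem a h)
    induction t with
    | nil =>
      simp only [List.filter_nil]
      rw [editDist_nil_right, editDist_nil_right]
      simp
    | cons b t iht =>
      rw [show (a :: s) ++ List.replicate x c = a :: (s ++ List.replicate x c) from rfl]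
      conv_rhs => rw [editDist, levenshtein_cons_cons]
      refine le_min ?_ (le_min ?_ ?_)
      · -- delete a
        have h1 := editDist_del_le a s ((b :: t).filter (· ≠ c))
        have h2 := ihs hcs (b :: t)
        simp only [Levenshtein.defaultCost_delete]
        rw [← editDist]
        omega
      · -- insert b
        simp only [Levenshtein.defaultCost_insert]
        rw [← editDist]
        by_cases hb : b = c
        · subst hb
          rw [filter_cons_self]
          have h3 := iht
          rw [List.cons_append] at h3
          omega
        · rw [filter_cons_ne hb]
          have h2 := editDist_ins_le (a :: s) b (t.filter (· ≠ c))
          have h3 := iht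
          rw [List.cons_append] at h3
          omega
      · -- substitute
        rw [← editDist]
        by_cases hb : b = c
        · rw [hb, filter_cons_self]
          simp only [Levenshtein.defaultCost_substitute, if_neg hac]
          have h1 := editDist_del_le a s (t.filter (· ≠ c))
          have h2 := ihs hcs t
          omega
        · rw [filter_cons_ne hb]
          have h2 := editDist_sub_le a s b (t.filter (· ≠ c))
          have h3 := ihs hcs t
          simp only [Levenshtein.defaultCost_substitute] at *
          omega

end Aux

/-- For `k ≥ 1` strings `S₁, …, S_k` over `Σ`, a symbol `c ∉ Σ`, and
`x ≥ 0`, appending the block `c^x` to every string leaves the median edit distance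
unchanged: `δ_E(S₁·c^x, …, S_k·c^x) = δ_E(S₁, …, S_k)`. -/
theorem median_append_fresh_block
    {β : Type*} [DecidableEq β] (k : ℕ) (hk : 1 ≤ k)
    (Sig : Set β) (S : Fin k → List β) (hS : ∀ i, ∀ ch ∈ S i, ch ∈ Sig)
    (c : β) (hc : c ∉ Sig) (x : ℕ) :
    medianED (List.ofFn fun i => S i ++ List.replicate x c) =
      medianED (List.ofFn S) := by
  have hne : ∀ (L : List (List β)),
      { d : ℕ | ∃ T : List β, d = (L.map fun s => editDist s T).sum }.Nonempty :=
    fun L => ⟨_, [], rfl⟩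
  apply le_antisymm
  · unfold medianED
    obtain ⟨T, hT⟩ := Nat.sInf_mem (hne (List.ofFn S))
    rw [hT]
    refine le_trans (Nat.sInf_le ⟨T ++ List.replicate x c, rfl⟩) ?_
    rw [List.map_ofFn, List.map_ofFn, List.sum_ofFn, List.sum_ofFn]
    refine Finset.sum_le_sum fun i _ => ?_
    exact editDist_append_le (List.replicate x c) (S i) T
  · unfold medianED
    obtain ⟨T, hT⟩ := Nat.sInf_mem (hne (List.ofFn fun i => S i ++ List.replicate x c))
    rw [hT]
    refine le_trans (Nat.sInf_le ⟨T.filter (· ≠ c), rfl⟩) ?_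
    rw [List.map_ofFn, List.map_ofFn, List.sum_ofFn, List.sum_ofFn]
    refine Finset.sum_le_sum fun i _ => ?_
    exact editDist_filter_le c x (S i) (fun h => hc (hS i c h)) T
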